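/- For all integers k ≥ 2, n ≥ 1, p ≥ 0, r ≥ 0, there is a surjective group homomorphism from G(k,n,p,r) onto (ℤ/pℤ) × (ℤ/rℤ) sending the image of c₂ to (1,0), the image of d₂ to (0,1), and the images of all other generators to (0,0). (Surjectivity half of the isomorphism in Lemma 3.3.) -/

import Mathlib

/-- Generators of the presentation: `a1, b1, a2, b2`, the tilde generators
`ct = c̃`, `dt = d̃`, and `c i`, `d i` for `i : Fin k`, where `c i` denotes
`c_{i+1}` (so `c ⟨0,_⟩ = c₁`, `c ⟨1,_⟩ = c₂`, …). -/
inductive Gen (k : ℕ) : Type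
  | a1 | b1 | a2 | b2 | ct | dt
  | c : Fin k → Gen k
  | d : Fin k → Gen k

namespace Gen

variable (k : ℕ)

def A1 : FreeGroup (Gen k) := FreeGroup.of Gen.a1
def B1 : FreeGroup (Gen k) := FreeGroup.of Gen.b1
def A2 : FreeGroup (Gen k) := FreeGroup.of Gen.a2
def B2 : FreeGroup (Gen k) := FreeGroup.of Gen.b2
def Ct : FreeGroup (Gen k) := FreeGroup.of Gen.ct
def Dt : FreeGroup (Gen k) := FreeGroup.of Gen.dt
def C (i : Fin k) : FreeGroup (Gen k) := FreeGroup.of (Gen.c i)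
def D (i : Fin k) : FreeGroup (Gen k) := FreeGroup.of (Gen.d i)

end Gen

open scoped commutatorElement in
open Gen in
/-- The relators of the presentation of `π₁(M)` from Lemma 3.2 (a relation
`w = v` is encoded as the relator `w * v⁻¹`). -/
def rels (k n p r : ℕ) : Set (FreeGroup (Gen k)) :=
  { x |
    -- a₂ = c̃⁻¹ a₁ c̃
    x = A2 k * ((Ct k)⁻¹ * A1 k * Ct k)⁻¹ ∨
    -- b₂ = c̃⁻¹ b₁ c̃
    x = B2 k * ((Ct k)⁻¹ * B1 k * Ct k)⁻¹ ∨
    -- b₁ = c̃⁻¹ b₂ c̃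
    x = B1 k * ((Ct k)⁻¹ * B2 k * Ct k)⁻¹ ∨
    -- [b₂, d̃] = 1
    x = ⁅B2 k, Dt k⁆ ∨
    -- [a₁⁻¹ b₁⁻¹ a₂, d̃] = 1
    x = ⁅(A1 k)⁻¹ * (B1 k)⁻¹ * A2 k, Dt k⁆ ∨
    -- [a₂⁻¹ b₂⁻¹ a₁, d̃] = 1
    x = ⁅(A2 k)⁻¹ * (B2 k)⁻¹ * A1 k, Dt k⁆ ∨
    -- c̃⁻¹ a₁ a₂ c̃ a₁⁻¹ a₂⁻¹ = d̃
    x = (Ct k)⁻¹ * A1 k * A2 k * Ct k * (A1 k)⁻¹ * (A2 k)⁻¹ * (Dt k)⁻¹ ∨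
    -- [a₁, d̃⁻¹] = c̃
    x = ⁅A1 k, (Dt k)⁻¹⁆ * (Ct k)⁻¹ ∨
    -- [b₁, d̃] = 1
    x = ⁅B1 k, Dt k⁆ ∨
    -- [a₁, b₁][a₂, b₂] = 1
    x = ⁅A1 k, B1 k⁆ * ⁅A2 k, B2 k⁆ ∨
    -- [c₁,d₁][c₂,d₂]⋯[c_k,d_k][c̃,d̃] = 1
    x = (List.ofFn fun i : Fin k => ⁅C k i, D k i⁆).prod * ⁅Ct k, Dt k⁆ ∨
    -- relations involving c₁, d₁  (index 0)
    (∃ i : Fin k, (i : ℕ) = 0 ∧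
      (x = ⁅(B1 k)⁻¹, (D k i)⁻¹⁆ * (A1 k)⁻¹ ∨      -- [b₁⁻¹,d₁⁻¹] = a₁
       x = ⁅(A1 k)⁻¹, D k i⁆ * (B1 k)⁻¹ ∨           -- [a₁⁻¹,d₁] = b₁
       x = ⁅(B2 k)⁻¹, (D k i)⁻¹⁆ * (C k i)⁻¹ ∨      -- [b₂⁻¹,d₁⁻¹] = c₁
       x = ⁅B2 k, (C k i)⁻¹⁆ ^ n * (D k i)⁻¹ ∨      -- [b₂,c₁⁻¹]ⁿ = d₁
       x = ⁅A1 k, C k i⁆ ∨ x = ⁅B1 k, C k i⁆ ∨      -- [a₁,c₁] = [b₁,c₁] = 1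
       x = ⁅A2 k, C k i⁆ ∨ x = ⁅A2 k, D k i⁆)) ∨    -- [a₂,c₁] = [a₂,d₁] = 1
    -- relations involving c₂, d₂  (index 1)
    (∃ i : Fin k, (i : ℕ) = 1 ∧
      (x = ⁅(B2 k)⁻¹, (D k i)⁻¹⁆ * ((C k i) ^ p)⁻¹ ∨  -- [b₂⁻¹,d₂⁻¹] = c₂ᵖ
       x = ⁅B2 k, (C k i)⁻¹⁆ * ((D k i) ^ r)⁻¹)) ∨    -- [b₂,c₂⁻¹] = d₂ʳ
    -- relations [b₂⁻¹,d_i⁻¹] = c_i, [b₂,c_i⁻¹] = d_i for 3 ≤ i ≤ k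
    (∃ i : Fin k, 2 ≤ (i : ℕ) ∧
      (x = ⁅(B2 k)⁻¹, (D k i)⁻¹⁆ * (C k i)⁻¹ ∨
       x = ⁅B2 k, (C k i)⁻¹⁆ * (D k i)⁻¹)) ∨
    -- commuting relations for 2 ≤ i ≤ k
    (∃ i : Fin k, 1 ≤ (i : ℕ) ∧
      (x = ⁅A2 k, C k i⁆ ∨ x = ⁅A2 k, D k i⁆ ∨
       x = ⁅A1 k, C k i⁆ ∨ x = ⁅B1 k, D k i⁆ ∨
       x = ⁅A1 k, D k i⁆ ∨ x = ⁅B1 k, C k i⁆)) }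

/-- The group `G(k,n,p,r)` of Lemma 3.2/3.3: the fundamental group of the
surgered manifold, given by the above presentation. -/
abbrev G (k n p r : ℕ) : Type := PresentedGroup (rels k n p r)

/-- The image in `G k n p r` of a generator. -/
abbrev gen (k n p r : ℕ) (g : Gen k) : G k n p r := PresentedGroup.of g


section Aux

variable {k n p r : ℕ}

open scoped commutatorElement

/-- The target: `Multiplicative (ZMod p × ZMod r)`. -/
abbrev Tgt (p r : ℕ) := Multiplicative (ZMod p × ZMod r)

/-- The map on generators. -/
def genMap (k p r : ℕ) : Gen k → Tgt p r
  | Gen.c i => if (i : ℕ) = 1 then Multiplicative.ofAdd (1, 0) else 1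
  | Gen.d i => if (i : ℕ) = 1 then Multiplicative.ofAdd (0, 1) else 1
  | _ => 1

lemma comm_triv (a b : Tgt p r) : ⁅a, b⁆ = 1 :=
  commutatorElement_eq_one_iff_commute.mpr (mul_comm a b)

lemma ofAdd10_pow : (Multiplicative.ofAdd ((1 : ZMod p), (0 : ZMod r))) ^ p = 1 := by
  rw [← ofAdd_nsmul]
  simp [Prod.smul_def, nsmul_eq_mul, ZMod.natCast_self]

lemma ofAdd01_pow : (Multiplicative.ofAdd ((0 : ZMod p), (1 : ZMod r))) ^ r = 1 := by
  rw [← ofAdd_nsmul]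
  simp [Prod.smul_def, nsmul_eq_mul, ZMod.natCast_self]

lemma rels_mapped (k n p r : ℕ) :
    ∀ x ∈ rels k n p r, FreeGroup.lift (genMap k p r) x = 1 := by
  have hc : ∀ a b : Tgt p r, ⁅a, b⁆ = 1 := comm_triv
  have hF : ∀ u v : FreeGroup (Gen k),
      FreeGroup.lift (genMap k p r) ⁅u, v⁆ = 1 := by
    intro u v
    rw [map_commutatorElement]
    exact hc _ _
  rintro x (rfl | rfl | rfl | rfl | rfl | rfl | rfl | rfl | rfl | rfl | rfl |
    ⟨i, hi, (rfl | rfl | rfl | rfl | rfl | rfl | rfl | rfl)⟩ |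
    ⟨i, hi, (rfl | rfl)⟩ | ⟨i, hi, (rfl | rfl)⟩ |
    ⟨i, hi, (rfl | rfl | rfl | rfl | rfl | rfl)⟩) <;>
    simp only [map_mul, map_inv, map_pow, map_list_prod, List.map_ofFn, hF,
      Gen.A1, Gen.B1, Gen.A2, Gen.B2, Gen.Ct, Gen.Dt, Gen.C, Gen.D,
      FreeGroup.lift_apply_of, List.prod_ofFn] <;>
    first
      | (have hi' : ¬ (i : ℕ) = 1 := by omega
         simp [genMap, hF, hi']
         done)
      | (simp [genMap, hF, ofAdd10_pow, ofAdd01_pow, hi]; done)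
      | (simp [genMap, hF, ofAdd10_pow, ofAdd01_pow]; done)

end Aux

/-- surjectivity half of the isomorphism of Lemma 3.3: there
is a surjective homomorphism `G(k,n,p,r) → ℤ/p × ℤ/r` sending `c₂ ↦ (1,0)`,
`d₂ ↦ (0,1)`, and all other generators to the identity. -/
theorem surj_hom_onto_zmod_prod (k n p r : ℕ) (hk : 2 ≤ k) (hn : 1 ≤ n) :
    ∃ f : G k n p r →* Multiplicative (ZMod p × ZMod r),
      Function.Surjective f ∧
      f (gen k n p r (Gen.c ⟨1, by omega⟩)) = Multiplicative.ofAdd (1, 0) ∧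
      f (gen k n p r (Gen.d ⟨1, by omega⟩)) = Multiplicative.ofAdd (0, 1) ∧
      f (gen k n p r Gen.a1) = 1 ∧ f (gen k n p r Gen.b1) = 1 ∧
      f (gen k n p r Gen.a2) = 1 ∧ f (gen k n p r Gen.b2) = 1 ∧
      f (gen k n p r Gen.ct) = 1 ∧ f (gen k n p r Gen.dt) = 1 ∧
      ∀ i : Fin k, (i : ℕ) ≠ 1 →
        f (gen k n p r (Gen.c i)) = 1 ∧ f (gen k n p r (Gen.d i)) = 1 := by
  refine ⟨PresentedGroup.toGroup (rels_mapped k n p r), ?_, ?_, ?_, ?_, ?_, ?_, ?_, ?_, ?_, ?_⟩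
  · intro z
    obtain ⟨m, hm⟩ := ZMod.intCast_surjective (Multiplicative.toAdd z).1
    obtain ⟨l, hl⟩ := ZMod.intCast_surjective (Multiplicative.toAdd z).2
    refine ⟨(gen k n p r (Gen.c ⟨1, by omega⟩)) ^ m *
      (gen k n p r (Gen.d ⟨1, by omega⟩)) ^ l, ?_⟩
    rw [map_mul, map_zpow, map_zpow]
    show (PresentedGroup.toGroup _ (PresentedGroup.of _)) ^ m *
      (PresentedGroup.toGroup _ (PresentedGroup.of _)) ^ l = _
    rw [PresentedGroup.toGroup.of, PresentedGroup.toGroup.of]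
    simp only [genMap, if_true]
    rw [← ofAdd_zsmul, ← ofAdd_zsmul, ← ofAdd_add]
    have : m • ((1 : ZMod p), (0 : ZMod r)) + l • ((0 : ZMod p), (1 : ZMod r))
        = Multiplicative.toAdd z := by
      rw [show Multiplicative.toAdd z
        = ((Multiplicative.toAdd z).1, (Multiplicative.toAdd z).2) from rfl, ← hm, ← hl]
      simp [Prod.smul_def, zsmul_eq_mul, Prod.ext_iff]
    rw [this]; rfl
  all_goals try { rw [show gen k n p r _ = PresentedGroup.of _ from rfl,
    PresentedGroup.toGroup.of]; simp [genMap] }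
  intro i hi
  constructor <;> · rw [show gen k n p r _ = PresentedGroup.of _ from rfl,
    PresentedGroup.toGroup.of]; simp [genMap, hi]
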